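/- Let μ^1,...,μ^N ∈ P(ℝ^T) be laws of martingales with respect to their canonical filtrations, and assume each restricted market is complete (every (F^i, μ^i)-martingale has a stochastic-integral representation against X^i). Let π be a coupling of μ^1,...,μ^N and let X = (X^1,...,X^N) be the ℝ^N-valued canonical process on (ℝ^T)^N with its generated filtration F^X. Then X is an (F^X, π)-martingale if and only if π is multicausal, i.e., for every i and every t, (X^i_1,...,X^i_T) is conditionally independent of {(X^j_1,...,X^j_t) : j ≠ i} given (X^i_1,...,X^i_t). -/

import Mathlib

open MeasureTheory ProbabilityTheory

noncomputable section

abbrev OTPath (T : ℕ) := Fin T → ℝ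

/-- Evaluation of a path at an ℕ-index (zero-based; junk value `0` past the horizon). -/
def ev {T : ℕ} (x : OTPath T) (n : ℕ) : ℝ := if h : n < T then x ⟨n, h⟩ else 0

/-- Canonical filtration on the path space: σ-algebra generated by the first `t` coordinates. -/
def filt (T t : ℕ) : MeasurableSpace (OTPath T) :=
  ⨆ s : {s : Fin T // (s : ℕ) < t},
    MeasurableSpace.comap (fun x : OTPath T => x s.1) inferInstance

lemma filt_le (T t : ℕ) : filt T t ≤ (inferInstance : MeasurableSpace (OTPath T)) :=
  iSup_le fun s => (measurable_pi_apply s.1).comap_le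

/-- `μ` is the law of a process which is a martingale in its canonical filtration. -/
def IsMartLaw (T : ℕ) (μ : Measure (OTPath T)) [IsFiniteMeasure μ] : Prop :=
  (∀ t : ℕ, t < T → Integrable (fun x => ev x t) μ) ∧
  ∀ s t : ℕ, s ≤ t → t < T →
    μ[fun x => ev x t | filt T (s + 1)] =ᵐ[μ] fun x => ev x s

/-- A martingale (in the canonical filtration, under `μ`) on the path space. -/
def IsMart (T : ℕ) (μ : Measure (OTPath T)) [IsFiniteMeasure μ] (M : ℕ → OTPath T → ℝ) : Prop :=
  (∀ t : ℕ, t < T → Measurable[filt T (t + 1)] (M t) ∧ Integrable (M t) μ) ∧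
  ∀ s t : ℕ, s ≤ t → t < T → μ[M t | filt T (s + 1)] =ᵐ[μ] M s

/-- Completeness of the single-asset market with law `μ`: every martingale has a
stochastic-integral representation against the canonical process, where `X_0 := E[X_1]`. -/
def CompleteMarket (T : ℕ) (μ : Measure (OTPath T)) [IsFiniteMeasure μ] : Prop :=
  ∀ M : ℕ → OTPath T → ℝ, IsMart T μ M →
    ∃ Δ : ℕ → OTPath T → ℝ, (∀ s, Measurable[filt T s] (Δ s)) ∧
      ∀ t : ℕ, t < T → M t =ᵐ[μ] fun x =>
        (∫ y, M 0 y ∂μ) + Δ 0 x * (ev x 0 - ∫ y, ev y 0 ∂μ) +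
        ∑ s ∈ Finset.Icc 1 t, Δ s x * (ev x s - ev x (s - 1))

/-- σ-algebra generated by the first `t` coordinates of the `i`-th component process. -/
def filtI (N T : ℕ) (i : Fin N) (t : ℕ) : MeasurableSpace (Fin N → OTPath T) :=
  ⨆ s : {s : Fin T // (s : ℕ) < t},
    MeasurableSpace.comap (fun ω : Fin N → OTPath T => ω i s.1) inferInstance

lemma filtI_le (N T : ℕ) (i : Fin N) (t : ℕ) :
    filtI N T i t ≤ (inferInstance : MeasurableSpace (Fin N → OTPath T)) :=
  iSup_le fun s => Measurable.comap_le ((measurable_pi_apply s.1).comp (measurable_pi_apply i) : Measurable fun ω : Fin N → OTPath T => ω i s.1)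

/-- σ-algebra generated by the first `t` coordinates of all processes other than the `i`-th. -/
def filtOthers (N T : ℕ) (i : Fin N) (t : ℕ) : MeasurableSpace (Fin N → OTPath T) :=
  ⨆ j : {j : Fin N // j ≠ i}, filtI N T j.1 t

/-- The joint filtration `F^X` generated by all processes up to time `t`. -/
def filtJoint (N T : ℕ) (t : ℕ) : MeasurableSpace (Fin N → OTPath T) :=
  ⨆ i : Fin N, filtI N T i t

namespace MCAux

open Set

variable {Ω : Type*}

lemma integrable_ind {mΩ : MeasurableSpace Ω} {π : Measure Ω} [IsFiniteMeasure π] {A : Set Ω} (hA : MeasurableSet[mΩ] A) :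
    Integrable (A.indicator fun _ => (1:ℝ)) π :=
  (integrable_const (1:ℝ)).indicator hA

lemma condexp_ind_nonneg (m' : MeasurableSpace Ω) {mΩ : MeasurableSpace Ω} {π : Measure Ω}
    (B : Set Ω) :
    0 ≤ᵐ[π] π⟦B|m'⟧ :=
  condExp_nonneg (Filter.Eventually.of_forall fun x =>
    Set.indicator_nonneg (fun _ _ => zero_le_one) x)

lemma condexp_ind_norm_le {m' : MeasurableSpace Ω} {mΩ : MeasurableSpace Ω} {π : Measure Ω}
    [IsProbabilityMeasure π] (hm' : m' ≤ mΩ) {B : Set Ω}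
    (hB : MeasurableSet[mΩ] B) : ∀ᵐ x ∂π, ‖(π⟦B|m'⟧) x‖ ≤ 1 := by
  have h1 : π⟦B|m'⟧ ≤ᵐ[π] π[(fun _ => (1:ℝ))|m'] := by
    refine condExp_mono (integrable_ind hB) (integrable_const _)
      (Filter.Eventually.of_forall fun x => ?_)
    exact Set.indicator_le_self' (fun _ _ => zero_le_one) x
  have h2 := condexp_ind_nonneg (π := π) m' B
  rw [condExp_const hm'] at h1
  filter_upwards [h1, h2] with x hx1 hx2
  simp only [Pi.zero_apply] at hx2
  rw [Real.norm_eq_abs, abs_le]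
  exact ⟨by linarith, hx1⟩

lemma continuous_setIntegral_mul {mΩ : MeasurableSpace Ω} {π : Measure Ω} {κ : Ω → ℝ} (hκ : AEStronglyMeasurable κ π)
    (hκb : ∀ᵐ x ∂π, ‖κ x‖ ≤ 1) (A : Set Ω) :
    Continuous fun f : Ω →₁[π] ℝ => ∫ x in A, f x * κ x ∂π := by
  have hint : ∀ f : Ω →₁[π] ℝ, Integrable (fun x => f x * κ x) π := by
    intro f
    exact ((L1.integrable_coeFn f).bdd_mul hκ hκb).congr
      (Filter.Eventually.of_forall fun x => mul_comm _ _)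
  refine (LipschitzWith.of_dist_le_mul (K := 1) fun f g => ?_).continuous
  have hsub : (fun x => (⇑(f - g) : Ω → ℝ) x * κ x) =ᵐ[π]
      fun x => f x * κ x - g x * κ x := by
    filter_upwards [Lp.coeFn_sub f g] with x hx
    simp only [hx, Pi.sub_apply, sub_mul]
  have h1 : ∫ x in A, f x * κ x ∂π - ∫ x in A, g x * κ x ∂π
      = ∫ x in A, (⇑(f - g) : Ω → ℝ) x * κ x ∂π := by
    rw [← integral_sub ((hint f).integrableOn) ((hint g).integrableOn)]
    exact (integral_congr_ae (Filter.EventuallyEq.restrict hsub)).symm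
  have h2 : ‖∫ x in A, (⇑(f - g) : Ω → ℝ) x * κ x ∂π‖
      ≤ ∫ x in A, ‖(⇑(f - g) : Ω → ℝ) x‖ ∂π := by
    refine (norm_integral_le_integral_norm _).trans ?_
    refine integral_mono_ae ((hint (f - g)).norm.integrableOn)
      ((L1.integrable_coeFn (f - g)).norm.integrableOn) ?_
    refine ae_restrict_of_ae ?_
    filter_upwards [hκb] with x hx
    calc ‖(⇑(f-g) : Ω → ℝ) x * κ x‖ = ‖(⇑(f-g) : Ω → ℝ) x‖ * ‖κ x‖ := norm_mul _ _
    _ ≤ ‖(⇑(f-g) : Ω → ℝ) x‖ * 1 := mul_le_mul_of_nonneg_left hx (norm_nonneg _)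
    _ = ‖(⇑(f-g) : Ω → ℝ) x‖ := mul_one _
  have h3 : ∫ x in A, ‖(⇑(f - g) : Ω → ℝ) x‖ ∂π ≤ ∫ x, ‖(⇑(f - g) : Ω → ℝ) x‖ ∂π :=
    setIntegral_le_integral (L1.integrable_coeFn (f - g)).norm
      (Filter.Eventually.of_forall fun x => norm_nonneg _)
  rw [dist_eq_norm, h1, dist_eq_norm, NNReal.coe_one, one_mul]
  calc ‖∫ x in A, (⇑(f - g) : Ω → ℝ) x * κ x ∂π‖
      ≤ ∫ x, ‖(⇑(f - g) : Ω → ℝ) x‖ ∂π := h2.trans h3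
  _ = ‖f - g‖ := (L1.norm_eq_integral_norm _).symm

lemma setIntegral_eq_of_condIndep {m' m₁ m₂ : MeasurableSpace Ω}
    {mΩ : MeasurableSpace Ω} {π : Measure Ω} [IsProbabilityMeasure π]
    [StandardBorelSpace Ω] [Nonempty Ω]
    (hm' : m' ≤ mΩ) (hm₁ : m₁ ≤ mΩ) (hm₂ : m₂ ≤ mΩ)
    (hCI : CondIndep m' m₁ m₂ hm' π)
    {A B : Set Ω} (hA : MeasurableSet[m'] A) (hB : MeasurableSet[m₂] B)
    {f : Ω → ℝ} (hf_int : Integrable f π) (hf_meas : AEStronglyMeasurable[m₁] f π) :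
    ∫ x in A ∩ B, f x ∂π = ∫ x in A, f x * (π⟦B|m'⟧) x ∂π := by
  have hCI' := (condIndep_iff m' m₁ m₂ hm' hm₁ hm₂ π).mp hCI
  set κ : Ω → ℝ := π⟦B|m'⟧ with hκ_def
  have hκSM : StronglyMeasurable[m'] κ := stronglyMeasurable_condExp
  have hκb : ∀ᵐ x ∂π, ‖κ x‖ ≤ 1 := condexp_ind_norm_le hm' (hm₂ _ hB)
  have hκaesm : AEStronglyMeasurable κ π := (hκSM.mono hm').aestronglyMeasurable
  have hmulint : ∀ {g : Ω → ℝ}, Integrable g π → Integrable (fun x => g x * κ x) π :=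
    fun hg => (hg.bdd_mul hκaesm hκb).congr
      (Filter.Eventually.of_forall fun x => mul_comm _ _)
  have hAamb : MeasurableSet[mΩ] A := hm' _ hA
  set P : (Ω → ℝ) → Prop :=
    fun g => ∫ x in A ∩ B, g x ∂π = ∫ x in A, g x * κ x ∂π with hP
  show P f
  refine MemLp.induction_stronglyMeasurable hm₁ (ENNReal.one_ne_top) P ?_ ?_ ?_ ?_
    (memLp_one_iff_integrable.mpr hf_int) hf_meas
  · -- indicator case
    intro c C hC _
    have hCamb : MeasurableSet[mΩ] C := hm₁ _ hC
    have key : ∫ x in A, (C.indicator fun _ => (1:ℝ)) x * κ x ∂π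
        = (π (A ∩ (C ∩ B))).toReal := by
      have hint_iCκ : Integrable (fun x => (C.indicator fun _ => (1:ℝ)) x * κ x) π :=
        hmulint (integrable_ind hCamb)
      have e1 : ∫ x in A, (π[fun x => (C.indicator fun _ => (1:ℝ)) x * κ x|m']) x ∂π
          = ∫ x in A, (C.indicator fun _ => (1:ℝ)) x * κ x ∂π :=
        setIntegral_condExp hm' hint_iCκ hA
      have e2 : π[fun x => (C.indicator fun _ => (1:ℝ)) x * κ x|m']
          =ᵐ[π] fun x => κ x * (π⟦C|m'⟧) x := by
        have := condExp_mul_of_stronglyMeasurable_left (μ := π) (m := m') hκSM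
          ((integrable_ind hCamb).bdd_mul hκaesm hκb) (integrable_ind hCamb)
        refine Filter.EventuallyEq.trans ?_ this
        exact condExp_congr_ae (Filter.Eventually.of_forall fun x => mul_comm _ _)
      have e3 : (fun x => κ x * (π⟦C|m'⟧) x) =ᵐ[π] π⟦C ∩ B|m'⟧ := by
        filter_upwards [hCI' C B hC hB] with x hx
        rw [hx]; simp only [Pi.mul_apply]; ring
      have e4 : ∫ x in A, (π⟦C ∩ B|m'⟧) x ∂π
          = ∫ x in A, ((C ∩ B).indicator fun _ => (1:ℝ)) x ∂π :=
        setIntegral_condExp hm' (integrable_ind (hCamb.inter (hm₂ _ hB))) hA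
      rw [← e1, integral_congr_ae (ae_restrict_of_ae (e2.trans e3)), e4,
        setIntegral_indicator (hCamb.inter (hm₂ _ hB)),
        setIntegral_const (1:ℝ), smul_eq_mul, mul_one, measureReal_def]
    show ∫ x in A ∩ B, C.indicator (fun _ => c) x ∂π
        = ∫ x in A, C.indicator (fun _ => c) x * κ x ∂π
    have hmulc : (fun x => C.indicator (fun _ => c) x * κ x)
        = fun x => c * ((C.indicator fun _ => (1:ℝ)) x * κ x) := by
      funext x
      by_cases hx : x ∈ C <;> simp [hx]
    rw [setIntegral_indicator hCamb, setIntegral_const c, hmulc,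
      integral_const_mul, key, smul_eq_mul]
    have hset : A ∩ B ∩ C = A ∩ (C ∩ B) := by
      rw [inter_assoc, inter_comm B C]
    rw [hset, mul_comm, measureReal_def]
  · -- additivity
    intro u v _ hu_mem hv_mem _ _ hPu hPv
    have hui := memLp_one_iff_integrable.mp hu_mem
    have hvi := memLp_one_iff_integrable.mp hv_mem
    show ∫ x in A ∩ B, (u + v) x ∂π = ∫ x in A, (u + v) x * κ x ∂π
    have h1 : ∫ x in A ∩ B, (u + v) x ∂π
        = ∫ x in A ∩ B, u x ∂π + ∫ x in A ∩ B, v x ∂π := by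
      simp only [Pi.add_apply]
      exact integral_add hui.integrableOn hvi.integrableOn
    have h2 : ∫ x in A, (u + v) x * κ x ∂π
        = ∫ x in A, u x * κ x ∂π + ∫ x in A, v x * κ x ∂π := by
      simp only [Pi.add_apply, add_mul]
      exact integral_add (hmulint hui).integrableOn (hmulint hvi).integrableOn
    rw [h1, h2, hPu, hPv]
  · -- closedness
    have h1 : Continuous fun g : lpMeas ℝ ℝ m₁ 1 π => ∫ x in A ∩ B, (g : Ω → ℝ) x ∂π :=
      (continuous_setIntegral (A ∩ B)).comp
        (ContinuousLinearMap.continuous (Submodule.subtypeL _))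
    have h2 : Continuous fun g : lpMeas ℝ ℝ m₁ 1 π => ∫ x in A, (g : Ω → ℝ) x * κ x ∂π :=
      (continuous_setIntegral_mul hκaesm hκb A).comp
        (ContinuousLinearMap.continuous (Submodule.subtypeL _))
    exact isClosed_eq h1 h2
  · -- ae congruence
    intro u v huv hu_mem hPu
    show ∫ x in A ∩ B, v x ∂π = ∫ x in A, v x * κ x ∂π
    have e1 : ∫ x in A ∩ B, v x ∂π = ∫ x in A ∩ B, u x ∂π :=
      integral_congr_ae (ae_restrict_of_ae huv.symm)
    have e2 : ∫ x in A, v x * κ x ∂π = ∫ x in A, u x * κ x ∂π := by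
      refine integral_congr_ae (ae_restrict_of_ae ?_)
      filter_upwards [huv] with x hx
      rw [hx]
    rw [e1, e2, hPu]


lemma setIntegral_mul_condexp_eq {m' : MeasurableSpace Ω} {mΩ : MeasurableSpace Ω}
    {π : Measure Ω} [IsProbabilityMeasure π] (hm' : m' ≤ mΩ)
    {A : Set Ω} (hA : MeasurableSet[m'] A) {κ : Ω → ℝ} (hκSM : StronglyMeasurable[m'] κ)
    (hκb : ∀ᵐ x ∂π, ‖κ x‖ ≤ 1) {f : Ω → ℝ} (hf : Integrable f π) :
    ∫ x in A, f x * κ x ∂π = ∫ x in A, (π[f|m']) x * κ x ∂π := by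
  have hκaesm : AEStronglyMeasurable κ π := (hκSM.mono hm').aestronglyMeasurable
  have hint1 : Integrable (fun x => κ x * f x) π := hf.bdd_mul hκaesm hκb
  have e0 : ∀ g : Ω → ℝ, ∫ x in A, g x * κ x ∂π = ∫ x in A, κ x * g x ∂π := fun g =>
    integral_congr_ae (Filter.Eventually.of_forall fun x => mul_comm _ _)
  have e1 : ∫ x in A, κ x * f x ∂π = ∫ x in A, (π[fun x => κ x * f x|m']) x ∂π :=
    (setIntegral_condExp hm' hint1 hA).symm
  have e2 : π[fun x => κ x * f x|m'] =ᵐ[π] fun x => κ x * (π[f|m']) x :=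
    condExp_mul_of_stronglyMeasurable_left hκSM hint1 hf
  rw [e0 f, e1, integral_congr_ae (ae_restrict_of_ae e2), ← e0 (π[f|m'])]

lemma condexp_sup_of_condIndep {m' m₁ m₂ : MeasurableSpace Ω}
    {mΩ : MeasurableSpace Ω} {π : Measure Ω} [IsProbabilityMeasure π]
    [StandardBorelSpace Ω] [Nonempty Ω]
    (hm' : m' ≤ mΩ) (hm₁ : m₁ ≤ mΩ) (hm₂ : m₂ ≤ mΩ) (hm'1 : m' ≤ m₁)
    (hCI : CondIndep m' m₁ m₂ hm' π)
    {f : Ω → ℝ} (hf_int : Integrable f π) (hf_meas : AEStronglyMeasurable[m₁] f π) :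
    π[f|m' ⊔ m₂] =ᵐ[π] π[f|m'] := by
  have hsup : m' ⊔ m₂ ≤ mΩ := sup_le hm' hm₂
  refine (ae_eq_condExp_of_forall_setIntegral_eq hsup hf_int
    (fun s _ _ => integrable_condExp.integrableOn) (fun s hs _ => ?_)
    (((stronglyMeasurable_condExp (m := m') (μ := π) (f := f)).mono (le_sup_left : m' ≤ m' ⊔ m₂)).aestronglyMeasurable)).symm
  set pSys : Set (Set Ω) :=
    {S | ∃ A B, MeasurableSet[m'] A ∧ MeasurableSet[m₂] B ∧ S = A ∩ B} with hpSys
  have h_eq : (m' ⊔ m₂) = MeasurableSpace.generateFrom pSys := by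
    refine le_antisymm (sup_le ?_ ?_) (MeasurableSpace.generateFrom_le ?_)
    · intro A hA
      exact MeasurableSpace.measurableSet_generateFrom
        ⟨A, univ, hA, MeasurableSet.univ, (inter_univ A).symm⟩
    · intro B hB
      exact MeasurableSpace.measurableSet_generateFrom
        ⟨univ, B, MeasurableSet.univ, hB, (univ_inter B).symm⟩
    · rintro S ⟨A, B, hA, hB, rfl⟩
      exact ((le_sup_left : m' ≤ m' ⊔ m₂) _ hA).inter ((le_sup_right : m₂ ≤ m' ⊔ m₂) _ hB)
  have h_pi : IsPiSystem pSys := by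
    rintro S ⟨A, B, hA, hB, rfl⟩ S' ⟨A', B', hA', hB', rfl⟩ _
    exact ⟨A ∩ A', B ∩ B', hA.inter hA', hB.inter hB', inter_inter_inter_comm A B A' B'⟩
  have hmain : ∀ S, MeasurableSet[m' ⊔ m₂] S →
      ∫ x in S, (π[f|m']) x ∂π = ∫ x in S, f x ∂π := by
    intro S hS
    refine MeasurableSpace.induction_on_inter (m := m' ⊔ m₂)
      (C := fun S _ => ∫ x in S, (π[f|m']) x ∂π = ∫ x in S, f x ∂π)
      h_eq h_pi (by simp) ?_ ?_ ?_ S hS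
    · rintro S ⟨A, B, hA, hB, rfl⟩
      have e_f : ∫ x in A ∩ B, f x ∂π = ∫ x in A, f x * (π⟦B|m'⟧) x ∂π :=
        setIntegral_eq_of_condIndep hm' hm₁ hm₂ hCI hA hB hf_int hf_meas
      have e_g : ∫ x in A ∩ B, (π[f|m']) x ∂π
          = ∫ x in A, (π[f|m']) x * (π⟦B|m'⟧) x ∂π :=
        setIntegral_eq_of_condIndep hm' hm₁ hm₂ hCI hA hB integrable_condExp
          ((stronglyMeasurable_condExp.mono hm'1).aestronglyMeasurable)
      have e_w : ∫ x in A, f x * (π⟦B|m'⟧) x ∂π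
          = ∫ x in A, (π[f|m']) x * (π⟦B|m'⟧) x ∂π :=
        setIntegral_mul_condexp_eq hm' hA stronglyMeasurable_condExp
          (condexp_ind_norm_le hm' (hm₂ _ hB)) hf_int
      rw [e_g, e_f, e_w]
    · intro S hSm hCS
      have hSamb : MeasurableSet[mΩ] S := hsup _ hSm
      have h1 := integral_add_compl hSamb (integrable_condExp : Integrable (π[f|m']) π)
      have h2 := integral_add_compl hSamb hf_int
      have h3 : ∫ x, (π[f|m']) x ∂π = ∫ x, f x ∂π := integral_condExp hm'
      linarith
    · intro g hdisj hmeas hCg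
      have hgamb : ∀ n, MeasurableSet[mΩ] (g n) := fun n => hsup _ (hmeas n)
      rw [integral_iUnion hgamb hdisj integrable_condExp.integrableOn,
        integral_iUnion hgamb hdisj hf_int.integrableOn]
      exact tsum_congr fun n => hCg n
  exact hmain s hs

lemma condIndep_of_condexp_sup_eq {m' m₁ m₂ : MeasurableSpace Ω}
    {mΩ : MeasurableSpace Ω} {π : Measure Ω} [IsProbabilityMeasure π]
    [StandardBorelSpace Ω] [Nonempty Ω]
    (hm' : m' ≤ mΩ) (hm₁ : m₁ ≤ mΩ) (hm₂ : m₂ ≤ mΩ)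
    (h : ∀ A : Set Ω, MeasurableSet[m₁] A →
      π[A.indicator (fun _ => (1:ℝ))|m' ⊔ m₂] =ᵐ[π] π[A.indicator (fun _ => (1:ℝ))|m']) :
    CondIndep m' m₁ m₂ hm' π := by
  rw [condIndep_iff m' m₁ m₂ hm' hm₁ hm₂ π]
  intro A B hA hB
  have hAamb : MeasurableSet[mΩ] A := hm₁ _ hA
  have hBamb : MeasurableSet[mΩ] B := hm₂ _ hB
  have hsup : m' ⊔ m₂ ≤ mΩ := sup_le hm' hm₂
  set iA : Ω → ℝ := A.indicator fun _ => (1:ℝ) with hiA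
  set iB : Ω → ℝ := B.indicator fun _ => (1:ℝ) with hiB
  have hiB_norm : ∀ x, ‖iB x‖ ≤ 1 := by
    intro x
    by_cases hx : x ∈ B <;> simp [hiB, Set.indicator_of_mem, Set.indicator_of_notMem, hx]
  have hiBSM : StronglyMeasurable[m' ⊔ m₂] iB :=
    stronglyMeasurable_const.indicator ((le_sup_right : m₂ ≤ m' ⊔ m₂) _ hB)
  have hprod_int : Integrable (fun x => iB x * iA x) π :=
    (integrable_ind hAamb).bdd_mul
      ((stronglyMeasurable_const.indicator hBamb).aestronglyMeasurable)
      (Filter.Eventually.of_forall hiB_norm)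
  have step0 : (A ∩ B).indicator (fun _ => (1:ℝ)) = fun x => iB x * iA x := by
    funext x
    by_cases hxA : x ∈ A <;> by_cases hxB : x ∈ B <;>
      simp [hiA, hiB, Set.indicator_apply, Set.mem_inter_iff, hxA, hxB]
  have t2 : π[fun x => iB x * iA x|m']
      =ᵐ[π] π[π[fun x => iB x * iA x|m' ⊔ m₂]|m'] :=
    (condExp_condExp_of_le le_sup_left hsup).symm
  have t3 : π[fun x => iB x * iA x|m' ⊔ m₂]
      =ᵐ[π] fun x => iB x * (π[iA|m' ⊔ m₂]) x :=
    condExp_mul_of_stronglyMeasurable_left hiBSM hprod_int (integrable_ind hAamb)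
  have t4 : (fun x => iB x * (π[iA|m' ⊔ m₂]) x)
      =ᵐ[π] fun x => iB x * (π[iA|m']) x := by
    filter_upwards [h A hA] with x hx
    rw [hx]
  have hκA_int : Integrable (fun x => (π[iA|m']) x * iB x) π :=
    (integrable_ind hBamb).bdd_mul
      ((stronglyMeasurable_condExp.mono hm').aestronglyMeasurable)
      (condexp_ind_norm_le hm' hAamb)
  have t5 : π[fun x => iB x * (π[iA|m']) x|m']
      =ᵐ[π] fun x => (π[iA|m']) x * (π[iB|m']) x := by
    have h0 : π[fun x => iB x * (π[iA|m']) x|m']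
        =ᵐ[π] π[fun x => (π[iA|m']) x * iB x|m'] :=
      condExp_congr_ae (Filter.Eventually.of_forall fun x => mul_comm _ _)
    exact h0.trans (condExp_mul_of_stronglyMeasurable_left stronglyMeasurable_condExp hκA_int
      (integrable_ind hBamb))
  calc π⟦A ∩ B|m'⟧ = π[fun x => iB x * iA x|m'] := by rw [step0]
  _ =ᵐ[π] π[π[fun x => iB x * iA x|m' ⊔ m₂]|m'] := t2
  _ =ᵐ[π] π[fun x => iB x * (π[iA|m']) x|m'] := condExp_congr_ae (t3.trans t4)
  _ =ᵐ[π] fun x => (π[iA|m']) x * (π[iB|m']) x := t5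
  _ = π⟦A|m'⟧ * π⟦B|m'⟧ := rfl


section PathLemmas

variable {N T : ℕ}

lemma filt_mono {s t : ℕ} (h : s ≤ t) : filt T s ≤ filt T t :=
  iSup_le fun u => le_iSup_of_le ⟨u.1, lt_of_lt_of_le u.2 h⟩ le_rfl

lemma filt_top : filt T T = (inferInstance : MeasurableSpace (OTPath T)) := by
  refine le_antisymm (filt_le T T) ?_
  rw [show (inferInstance : MeasurableSpace (OTPath T)) = MeasurableSpace.pi from rfl,
    MeasurableSpace.pi]
  exact iSup_le fun a => le_iSup_of_le (⟨a, a.isLt⟩ : {s : Fin T // (s : ℕ) < T}) le_rfl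

lemma filtI_eq_comap (i : Fin N) (t : ℕ) :
    filtI N T i t = (filt T t).comap (fun ω : Fin N → OTPath T => ω i) := by
  rw [filt, MeasurableSpace.comap_iSup]
  refine iSup_congr fun s => ?_
  rw [MeasurableSpace.comap_comp]
  rfl

lemma filtI_mono (i : Fin N) {s t : ℕ} (h : s ≤ t) : filtI N T i s ≤ filtI N T i t := by
  rw [filtI_eq_comap, filtI_eq_comap]
  exact MeasurableSpace.comap_mono (filt_mono h)

lemma filtOthers_le (i : Fin N) (t : ℕ) :
    filtOthers N T i t ≤ (inferInstance : MeasurableSpace (Fin N → OTPath T)) :=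
  iSup_le fun j => filtI_le N T j.1 t

lemma filtJoint_le (t : ℕ) :
    filtJoint N T t ≤ (inferInstance : MeasurableSpace (Fin N → OTPath T)) :=
  iSup_le fun i => filtI_le N T i t

lemma filtJoint_mono {s t : ℕ} (h : s ≤ t) : filtJoint N T s ≤ filtJoint N T t :=
  iSup_le fun i => le_iSup_of_le i (filtI_mono i h)

lemma filtI_le_joint (i : Fin N) (t : ℕ) : filtI N T i t ≤ filtJoint N T t :=
  le_iSup (fun i => filtI N T i t) i

lemma filtJoint_eq_sup (i : Fin N) (t : ℕ) :
    filtJoint N T t = filtI N T i t ⊔ filtOthers N T i t := by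
  refine le_antisymm (iSup_le fun j => ?_) ?_
  · by_cases hj : j = i
    · subst hj; exact le_sup_left
    · exact le_trans (le_iSup (fun j : {j : Fin N // j ≠ i} => filtI N T j.1 t) ⟨j, hj⟩)
        le_sup_right
  · exact sup_le (filtI_le_joint i t) (iSup_le fun j => filtI_le_joint j.1 t)

lemma measurable_eval_filtI (i : Fin N) (t : ℕ) :
    @Measurable _ _ (filtI N T i t) (filt T t) (fun ω => ω i) :=
  Measurable.of_comap_le (le_of_eq (filtI_eq_comap i t).symm)

lemma measurable_ev_filt {u t : ℕ} (h : u < t) :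
    Measurable[filt T t] (fun x : OTPath T => ev x u) := by
  by_cases hu : u < T
  · have : (fun x : OTPath T => ev x u) = fun x => x ⟨u, hu⟩ :=
      funext fun x => dif_pos hu
    rw [this]
    by_cases hut : u < t
    · exact Measurable.of_comap_le (le_iSup_of_le ⟨⟨u, hu⟩, hut⟩ le_rfl)
    · omega
  · have : (fun x : OTPath T => ev x u) = fun _ => (0:ℝ) := funext fun x => dif_neg hu
    rw [this]
    exact measurable_const

lemma measurable_ev (u : ℕ) : Measurable (fun x : OTPath T => ev x u) := by
  by_cases hu : u < T
  · exact ((measurable_ev_filt (Nat.lt_succ_self u)).mono (filt_le T (u+1)) le_rfl)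
  · have : (fun x : OTPath T => ev x u) = fun _ => (0:ℝ) := funext fun x => dif_neg hu
    rw [this]; exact measurable_const

lemma measurable_evI {u t : ℕ} (h : u < t) (i : Fin N) :
    Measurable[filtI N T i t] (fun ω : Fin N → OTPath T => ev (ω i) u) :=
  ((measurable_ev_filt h).comp (measurable_eval_filtI i t) : _)

section Transport

variable {ν : Measure (OTPath T)} [IsProbabilityMeasure ν]
  {π : Measure (Fin N → OTPath T)} [IsProbabilityMeasure π] {i : Fin N}

lemma integrable_comp_eval (hmarg : π.map (fun ω => ω i) = ν)
    {f : OTPath T → ℝ} (hf : Integrable f ν) :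
    Integrable (fun ω : Fin N → OTPath T => f (ω i)) π := by
  rw [← hmarg] at hf
  exact (integrable_map_measure hf.aestronglyMeasurable
    (measurable_pi_apply i).aemeasurable).mp hf

lemma ae_comp_eval (hmarg : π.map (fun ω => ω i) = ν)
    {f g : OTPath T → ℝ} (h : f =ᵐ[ν] g) :
    (fun ω : Fin N → OTPath T => f (ω i)) =ᵐ[π] fun ω => g (ω i) := by
  rw [← hmarg] at h
  exact ae_eq_comp (measurable_pi_apply i).aemeasurable h

lemma condexp_comp_eval (hmarg : π.map (fun ω => ω i) = ν) (t : ℕ)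
    {f : OTPath T → ℝ} (hf : Integrable f ν) :
    π[(fun ω => f (ω i))|(filt T t).comap (fun ω => ω i)] =ᵐ[π]
      fun ω => (ν[f|filt T t]) (ω i) := by
  have hm : filt T t ≤ (inferInstance : MeasurableSpace (OTPath T)) := filt_le T t
  have hcomap_le : (filt T t).comap (fun ω : Fin N → OTPath T => ω i)
      ≤ (inferInstance : MeasurableSpace (Fin N → OTPath T)) :=
    le_trans (MeasurableSpace.comap_mono hm) (measurable_pi_apply i).comap_le
  have hg_meas : Measurable[(filt T t).comap (fun ω : Fin N → OTPath T => ω i)]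
      (fun ω : Fin N → OTPath T => (ν[f|filt T t]) (ω i)) :=
    (stronglyMeasurable_condExp.measurable.comp
      (Measurable.of_comap_le le_rfl) : _)
  have hg_int : Integrable (fun ω : Fin N → OTPath T => (ν[f|filt T t]) (ω i)) π :=
    integrable_comp_eval hmarg integrable_condExp
  refine (ae_eq_condExp_of_forall_setIntegral_eq hcomap_le
    (integrable_comp_eval hmarg hf)
    (fun s _ _ => hg_int.integrableOn) (fun s hs _ => ?_)
    ((hg_meas.stronglyMeasurable).aestronglyMeasurable)).symm
  obtain ⟨B, hB, rfl⟩ := MeasurableSpace.measurableSet_comap.mp hs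
  have hBamb : MeasurableSet B := hm _ hB
  have e1 : ∫ ω in (fun ω : Fin N → OTPath T => ω i) ⁻¹' B, (ν[f|filt T t]) (ω i) ∂π
      = ∫ y in B, (ν[f|filt T t]) y ∂ν := by
    rw [← hmarg]
    exact (setIntegral_map hBamb
      (stronglyMeasurable_condExp.mono hm).aestronglyMeasurable
      (measurable_pi_apply i).aemeasurable).symm
  have e2 : ∫ y in B, (ν[f|filt T t]) y ∂ν = ∫ y in B, f y ∂ν :=
    setIntegral_condExp hm hf hB
  have e3 : ∫ y in B, f y ∂ν
      = ∫ ω in (fun ω : Fin N → OTPath T => ω i) ⁻¹' B, f (ω i) ∂π := by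
    rw [← hmarg]
    refine setIntegral_map hBamb ?_ (measurable_pi_apply i).aemeasurable
    rw [hmarg]
    exact hf.aestronglyMeasurable
  rw [e1, e2, e3]

end Transport

end PathLemmas


def repFn (T : ℕ) (c a : ℝ) (Δ : ℕ → OTPath T → ℝ) (u : ℕ) (x : OTPath T) : ℝ :=
  c + Δ 0 x * (ev x 0 - a) + ∑ s ∈ Finset.Icc 1 (u - 1), Δ s x * (ev x s - ev x (s - 1))

section Core

variable {N T : ℕ} {ν : Measure (OTPath T)} [IsProbabilityMeasure ν]
  {π : Measure (Fin N → OTPath T)} [IsProbabilityMeasure π] {i : Fin N}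

lemma core (hmarg : π.map (fun ω => ω i) = ν)
    (hints : ∀ u : ℕ, u < T → Integrable (fun x => ev x u) ν)
    {f : OTPath T → ℝ} (hf_meas : Measurable f) (hf_int : Integrable f ν)
    {c a : ℝ} {Δ : ℕ → OTPath T → ℝ} (hΔ : ∀ s, Measurable[filt T s] (Δ s))
    (hrep : ∀ u : ℕ, u < T → ν[f|filt T (u+1)] =ᵐ[ν] repFn T c a Δ (u+1))
    (𝔪 : ℕ → MeasurableSpace (Fin N → OTPath T))
    (h𝔪_mono : ∀ u v : ℕ, u ≤ v → 𝔪 u ≤ 𝔪 v)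
    (h𝔪_le : ∀ u, 𝔪 u ≤ (inferInstance : MeasurableSpace (Fin N → OTPath T)))
    (h𝔪_ge : ∀ u, filtI N T i u ≤ 𝔪 u)
    (t : ℕ) (ht1 : 1 ≤ t) (htT : t ≤ T)
    (h𝔪_mart : ∀ u, t ≤ u → u < T →
        π[(fun ω => ev (ω i) u)|𝔪 u] =ᵐ[π] fun ω => ev (ω i) (u - 1)) :
    π[(fun ω => f (ω i))|𝔪 t] =ᵐ[π] fun ω => repFn T c a Δ t (ω i) := by
  -- measurability of the representation function
  have hR_meas : ∀ u : ℕ, 1 ≤ u → Measurable[filt T u] (repFn T c a Δ u) := by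
    intro u hu
    refine Measurable.add (Measurable.add measurable_const ?_) ?_
    · exact ((hΔ 0).mono (filt_mono (Nat.zero_le u)) le_rfl).mul
        ((measurable_ev_filt (show 0 < u by omega)).sub measurable_const)
    · refine Finset.measurable_sum _ (fun s hs => ?_)
      obtain ⟨hs1, hs2⟩ := Finset.mem_Icc.mp hs
      exact ((hΔ s).mono (filt_mono (by omega)) le_rfl).mul
        ((measurable_ev_filt (by omega)).sub (measurable_ev_filt (by omega)))
  -- a.e. identification with the conditional expectations
  have hR_eq : ∀ u : ℕ, 1 ≤ u → u ≤ T → ν[f|filt T u] =ᵐ[ν] repFn T c a Δ u := by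
    intro u hu1 huT
    have h' := hrep (u - 1) (by omega)
    have h1 : u - 1 + 1 = u := by omega
    rw [h1] at h'
    exact h'
  have hR_int : ∀ u : ℕ, 1 ≤ u → u ≤ T → Integrable (repFn T c a Δ u) ν := by
    intro u hu1 huT
    exact integrable_condExp.congr (hR_eq u hu1 huT)
  have hfT : f =ᵐ[ν] repFn T c a Δ T := by
    have h1 : ν[f|filt T T] = f := by
      rw [filt_top]
      exact condExp_of_stronglyMeasurable le_rfl hf_meas.stronglyMeasurable hf_int
    have := hR_eq T (ht1.trans htT) (le_refl T)
    rwa [h1] at this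
  -- the single increments
  have hD_eq : ∀ u : ℕ, 1 ≤ u → ∀ x, repFn T c a Δ (u+1) x
      = repFn T c a Δ u x + Δ u x * (ev x u - ev x (u-1)) := by
    intro u hu x
    have h1 : u - 1 + 1 = u := by omega
    have h2 : (u + 1) - 1 = u := by omega
    simp only [repFn, h2]
    have hsum : (∑ s ∈ Finset.Icc 1 u, Δ s x * (ev x s - ev x (s-1)))
        = (∑ s ∈ Finset.Icc 1 (u-1), Δ s x * (ev x s - ev x (s-1)))
          + Δ u x * (ev x u - ev x (u-1)) := by
      calc (∑ s ∈ Finset.Icc 1 u, Δ s x * (ev x s - ev x (s-1)))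
          = ∑ s ∈ Finset.Icc 1 (u-1+1), Δ s x * (ev x s - ev x (s-1)) := by rw [h1]
      _ = (∑ s ∈ Finset.Icc 1 (u-1), Δ s x * (ev x s - ev x (s-1)))
            + Δ (u-1+1) x * (ev x (u-1+1) - ev x ((u-1+1) - 1)) :=
          Finset.sum_Icc_succ_top (by omega) _
      _ = (∑ s ∈ Finset.Icc 1 (u-1), Δ s x * (ev x s - ev x (s-1)))
            + Δ u x * (ev x u - ev x (u-1)) := by rw [h1]
    rw [hsum]
    ring
  have hD_int : ∀ u : ℕ, 1 ≤ u → u < T →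
      Integrable (fun x => Δ u x * (ev x u - ev x (u-1))) ν := by
    intro u hu1 huT
    refine ((hR_int (u+1) (by omega) (by omega)).sub (hR_int u hu1 (by omega))).congr ?_
    exact Filter.Eventually.of_forall fun x => by simp only [Pi.sub_apply]; rw [hD_eq u hu1 x]; ring
  -- downward induction
  have key : ∀ k : ℕ, ∀ u : ℕ, t ≤ u → u + k = T →
      π[(fun ω => f (ω i))|𝔪 u] =ᵐ[π] fun ω => repFn T c a Δ u (ω i) := by
    intro k
    induction k with
    | zero =>
      intro u htu huT
      have hu : u = T := by omega
      have hft : filt T u = (inferInstance : MeasurableSpace (OTPath T)) := by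
        rw [hu, filt_top]
      have hSM : StronglyMeasurable[𝔪 u] (fun ω : Fin N → OTPath T => f (ω i)) := by
        refine Measurable.stronglyMeasurable (Measurable.mono ?_ (h𝔪_ge u) le_rfl)
        exact (hf_meas.mono (le_of_eq hft.symm) le_rfl).comp (measurable_eval_filtI i u)
      rw [condExp_of_stronglyMeasurable (h𝔪_le u) hSM (integrable_comp_eval hmarg hf_int)]
      have hfu : f =ᵐ[ν] repFn T c a Δ u := by rw [hu]; exact hfT
      exact ae_comp_eval hmarg hfu
    | succ k ih =>
      intro u htu huT
      have hu1 : 1 ≤ u := le_trans ht1 htu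
      have huT' : u < T := by omega
      have step1 : π[(fun ω => f (ω i))|𝔪 u]
          =ᵐ[π] π[π[(fun ω => f (ω i))|𝔪 (u+1)]|𝔪 u] :=
        (condExp_condExp_of_le (h𝔪_mono u (u+1) (by omega)) (h𝔪_le (u+1))).symm
      have step2 : π[π[(fun ω => f (ω i))|𝔪 (u+1)]|𝔪 u]
          =ᵐ[π] π[(fun ω => repFn T c a Δ (u+1) (ω i))|𝔪 u] :=
        condExp_congr_ae (ih (u+1) (by omega) (by omega))
      have hsplit : (fun ω : Fin N → OTPath T => repFn T c a Δ (u+1) (ω i))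
          = (fun ω : Fin N → OTPath T => repFn T c a Δ u (ω i))
            + fun ω => Δ u (ω i) * (ev (ω i) u - ev (ω i) (u-1)) :=
        funext fun ω => hD_eq u hu1 (ω i)
      have hRIint : Integrable (fun ω : Fin N → OTPath T => repFn T c a Δ u (ω i)) π :=
        integrable_comp_eval hmarg (hR_int u hu1 (by omega))
      have hDIint : Integrable
          (fun ω : Fin N → OTPath T => Δ u (ω i) * (ev (ω i) u - ev (ω i) (u-1))) π :=
        integrable_comp_eval hmarg (hD_int u hu1 huT')
      have step3 : π[(fun ω => repFn T c a Δ (u+1) (ω i))|𝔪 u]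
          =ᵐ[π] π[(fun ω => repFn T c a Δ u (ω i))|𝔪 u]
            + π[(fun ω => Δ u (ω i) * (ev (ω i) u - ev (ω i) (u-1)))|𝔪 u] := by
        rw [hsplit]
        exact condExp_add hRIint hDIint (𝔪 u)
      have step4 : π[(fun ω => repFn T c a Δ u (ω i))|𝔪 u]
          = fun ω => repFn T c a Δ u (ω i) := by
        refine condExp_of_stronglyMeasurable (h𝔪_le u) ?_ hRIint
        refine Measurable.stronglyMeasurable (Measurable.mono ?_ (h𝔪_ge u) le_rfl)
        exact (hR_meas u hu1).comp (measurable_eval_filtI i u)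
      have step5 : π[(fun ω => Δ u (ω i) * (ev (ω i) u - ev (ω i) (u-1)))|𝔪 u]
          =ᵐ[π] (0 : (Fin N → OTPath T) → ℝ) := by
        have hΔSM : StronglyMeasurable[𝔪 u] (fun ω : Fin N → OTPath T => Δ u (ω i)) := by
          refine Measurable.stronglyMeasurable (Measurable.mono ?_ (h𝔪_ge u) le_rfl)
          exact (hΔ u).comp (measurable_eval_filtI i u)
        have hIncInt : Integrable
            (fun ω : Fin N → OTPath T => ev (ω i) u - ev (ω i) (u-1)) π :=
          integrable_comp_eval hmarg ((hints u huT').sub (hints (u-1) (by omega)))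
        have hpull := condExp_mul_of_stronglyMeasurable_left (m := 𝔪 u) (μ := π) hΔSM
          (hDIint : Integrable (fun ω => (fun ω : Fin N → OTPath T => Δ u (ω i)) ω
            * (fun ω : Fin N → OTPath T => ev (ω i) u - ev (ω i) (u-1)) ω) π) hIncInt
        have hzero : π[(fun ω : Fin N → OTPath T => ev (ω i) u - ev (ω i) (u-1))|𝔪 u]
            =ᵐ[π] (0 : (Fin N → OTPath T) → ℝ) := by
          have h1 := condExp_sub (m := 𝔪 u) (μ := π)
            (integrable_comp_eval hmarg (hints u huT'))
            (integrable_comp_eval hmarg (hints (u-1) (by omega)))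
            (f := fun ω : Fin N → OTPath T => ev (ω i) u)
            (g := fun ω : Fin N → OTPath T => ev (ω i) (u-1))
          have h2 := h𝔪_mart u htu huT'
          have h3 : π[(fun ω : Fin N → OTPath T => ev (ω i) (u-1))|𝔪 u]
              = fun ω : Fin N → OTPath T => ev (ω i) (u-1) := by
            refine condExp_of_stronglyMeasurable (h𝔪_le u) ?_
              (integrable_comp_eval hmarg (hints (u-1) (by omega)))
            exact ((measurable_evI (by omega) i).mono (h𝔪_ge u) le_rfl).stronglyMeasurable
          refine h1.trans ?_
          rw [h3]
          filter_upwards [h2] with ω hω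
          simp [hω]
        refine hpull.trans ?_
        filter_upwards [hzero] with ω hω
        have : (π[(fun ω : Fin N → OTPath T => ev (ω i) u - ev (ω i) (u-1))|𝔪 u]) ω = 0 := hω
        simp [this]
      refine step1.trans (step2.trans (step3.trans ?_))
      rw [step4]
      filter_upwards [step5] with ω hω
      simp only [Pi.add_apply, hω, Pi.zero_apply, add_zero]
  exact key (T - t) t le_rfl (by omega)

end Core

end MCAux

/-- A coupling of martingale laws of complete markets makes the joint canonical process
a martingale in the joint filtration iff it is multicausal. -/
theorem martingale_iff_multicausal
    (N T : ℕ) (μ : Fin N → Measure (OTPath T)) [∀ i, IsProbabilityMeasure (μ i)]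
    (hmart : ∀ i, IsMartLaw T (μ i))
    (hcomplete : ∀ i, CompleteMarket T (μ i))
    (π : Measure (Fin N → OTPath T)) [IsProbabilityMeasure π]
    (hmarg : ∀ i, π.map (fun ω => ω i) = μ i) :
    (∀ i : Fin N, ∀ s t : ℕ, s ≤ t → t < T →
        π[fun ω => ev (ω i) t | filtJoint N T (s + 1)] =ᵐ[π] fun ω => ev (ω i) s)
    ↔ (∀ i : Fin N, ∀ t : ℕ, 1 ≤ t → t ≤ T →
        CondIndep (filtI N T i t) (filtI N T i T) (filtOthers N T i t) (filtI_le N T i t) π) := by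
  classical
  -- representation of conditional-expectation martingales via completeness
  have getRep : ∀ (i : Fin N) (f : OTPath T → ℝ), Measurable f → Integrable f (μ i) →
      ∃ Δ : ℕ → OTPath T → ℝ, (∀ s, Measurable[filt T s] (Δ s)) ∧
        ∀ u : ℕ, u < T → (μ i)[f|filt T (u+1)] =ᵐ[μ i]
          MCAux.repFn T (∫ y, ((μ i)[f|filt T 1]) y ∂(μ i)) (∫ y, ev y 0 ∂(μ i)) Δ (u+1) := by
    intro i f hfm hfi
    obtain ⟨Δ, hΔ, hrep⟩ := hcomplete i (fun s => (μ i)[f|filt T (s+1)])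
      ⟨fun u _ => ⟨stronglyMeasurable_condExp.measurable, integrable_condExp⟩,
        fun s t hst htT => condExp_condExp_of_le
          (MCAux.filt_mono (Nat.succ_le_succ hst)) (filt_le T (t+1))⟩
    refine ⟨Δ, hΔ, fun u hu => ?_⟩
    refine (hrep u hu).trans (Filter.Eventually.of_forall fun x => ?_)
    simp only [MCAux.repFn, Nat.add_sub_cancel]
  -- the one-step martingale property w.r.t. the small filtrations, from the marginals
  have hImart : ∀ (i : Fin N), ∀ u : ℕ, 1 ≤ u → u < T →
      π[(fun ω => ev (ω i) u)|filtI N T i u] =ᵐ[π] fun ω => ev (ω i) (u-1) := by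
    intro i u hu1 huT
    rw [MCAux.filtI_eq_comap]
    refine (MCAux.condexp_comp_eval (hmarg i) u ((hmart i).1 u huT)).trans ?_
    have h2 := (hmart i).2 (u-1) u (by omega) huT
    have h3 : u - 1 + 1 = u := by omega
    rw [h3] at h2
    exact MCAux.ae_comp_eval (hmarg i) h2
  constructor
  · -- martingale ⇒ multicausal
    intro h i t ht1 htT
    refine MCAux.condIndep_of_condexp_sup_eq (filtI_le N T i t) (filtI_le N T i T)
      (MCAux.filtOthers_le i t) ?_
    intro A hA
    rw [← MCAux.filtJoint_eq_sup]
    have hA' : MeasurableSet[(filt T T).comap (fun ω : Fin N → OTPath T => ω i)] A := by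
      rwa [← MCAux.filtI_eq_comap]
    obtain ⟨C, hC, rfl⟩ := MeasurableSpace.measurableSet_comap.mp hA'
    have hCamb : MeasurableSet C := filt_le T T _ hC
    have hfm : Measurable (C.indicator fun _ => (1:ℝ)) :=
      measurable_const.indicator hCamb
    have hfi : Integrable (C.indicator fun _ => (1:ℝ)) (μ i) := MCAux.integrable_ind hCamb
    have hind : ((fun ω : Fin N → OTPath T => ω i) ⁻¹' C).indicator (fun _ => (1:ℝ))
        = fun ω => (C.indicator fun _ => (1:ℝ)) (ω i) := by
      funext ω
      by_cases hω : ω i ∈ C <;> simp [Set.indicator_apply, hω]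
    rw [hind]
    obtain ⟨Δ, hΔ, hrep⟩ := getRep i _ hfm hfi
    have hJmart : ∀ u, t ≤ u → u < T →
        π[(fun ω => ev (ω i) u)|filtJoint N T u] =ᵐ[π] fun ω => ev (ω i) (u-1) := by
      intro u hu huT
      have h' := h i (u-1) u (by omega) huT
      have h3 : u - 1 + 1 = u := by omega
      rw [h3] at h'
      exact h'
    have h1 := MCAux.core (hmarg i) (hmart i).1 hfm hfi hΔ hrep (filtJoint N T)
      (fun u v huv => MCAux.filtJoint_mono huv) (fun u => MCAux.filtJoint_le u)
      (fun u => MCAux.filtI_le_joint i u) t ht1 htT hJmart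
    have h2 := MCAux.core (hmarg i) (hmart i).1 hfm hfi hΔ hrep (fun u => filtI N T i u)
      (fun u v huv => MCAux.filtI_mono i huv) (fun u => filtI_le N T i u)
      (fun u => le_rfl) t ht1 htT
      (fun u hu huT => hImart i u (le_trans ht1 hu) huT)
    exact h1.trans h2.symm
  · -- multicausal ⇒ martingale
    intro h i s t hst htT
    have hfm : Measurable (fun x : OTPath T => ev x t) := MCAux.measurable_ev t
    have hfi : Integrable (fun x : OTPath T => ev x t) (μ i) := (hmart i).1 t htT
    obtain ⟨Δ, hΔ, hrep⟩ := getRep i _ hfm hfi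
    have hJmart : ∀ u, s + 1 ≤ u → u < T →
        π[(fun ω => ev (ω i) u)|filtJoint N T u] =ᵐ[π] fun ω => ev (ω i) (u-1) := by
      intro u hu huT
      have h1u : 1 ≤ u := by omega
      rw [MCAux.filtJoint_eq_sup i u]
      have hint : Integrable (fun ω : Fin N → OTPath T => ev (ω i) u) π :=
        MCAux.integrable_comp_eval (hmarg i) ((hmart i).1 u huT)
      have hsm : AEStronglyMeasurable[filtI N T i T]
          (fun ω : Fin N → OTPath T => ev (ω i) u) π :=
        ((MCAux.measurable_evI huT i).stronglyMeasurable).aestronglyMeasurable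
      refine (MCAux.condexp_sup_of_condIndep (filtI_le N T i u) (filtI_le N T i T)
        (MCAux.filtOthers_le i u) (MCAux.filtI_mono i (by omega : u ≤ T))
        (h i u h1u (by omega)) hint hsm).trans (hImart i u h1u huT)
    have h1 := MCAux.core (hmarg i) (hmart i).1 hfm hfi hΔ hrep (filtJoint N T)
      (fun u v huv => MCAux.filtJoint_mono huv) (fun u => MCAux.filtJoint_le u)
      (fun u => MCAux.filtI_le_joint i u) (s+1) (by omega) (by omega) hJmart
    have h2 := MCAux.core (hmarg i) (hmart i).1 hfm hfi hΔ hrep (fun u => filtI N T i u)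
      (fun u v huv => MCAux.filtI_mono i huv) (fun u => filtI_le N T i u)
      (fun u => le_rfl) (s+1) (by omega) (by omega)
      (fun u hu huT => hImart i u (by omega) huT)
    have h3 : π[(fun ω => ev (ω i) t)|filtI N T i (s+1)]
        =ᵐ[π] fun ω => ((μ i)[(fun x => ev x t)|filt T (s+1)]) (ω i) := by
      rw [MCAux.filtI_eq_comap]
      exact MCAux.condexp_comp_eval (hmarg i) (s+1) hfi
    have h4 : ((μ i)[(fun x => ev x t)|filt T (s+1)]) =ᵐ[μ i] fun x => ev x s :=
      (hmart i).2 s t hst htT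
    exact h1.trans (h2.symm.trans (h3.trans (MCAux.ae_comp_eval (hmarg i) h4)))
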